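/- Let λ > 0, σ > 0, μ0 ∈ ℝ^P, and let Y have independent coordinates Y_i ~ N((μ0)_i, σ²). Define h : ℝ → ℝ by h(t) = 1 if t ≤ −λ, 0 if −λ < t < λ, −1 if t ≥ λ. Then lim_{ε→0⁺} E[ (1/ε) Σ_{i=1}^P (h(Y_i + ε) − h(Y_i)) ] = −(1/(√(2π) σ)) Σ_{i=1}^P [ exp(−((μ0)_i + λ)²/(2σ²)) + exp(−((μ0)_i − λ)²/(2σ²)) ]. -/

import Mathlib

open MeasureTheory ProbabilityTheory Filter
open scoped BigOperators Topology

noncomputable section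

/-- The λ-derivative of the soft-thresholding map `t ↦ ST(t, λ)` away from `|t| = λ`:
`h(t) = 1` if `t ≤ -λ`, `0` if `-λ < t < λ`, `-1` if `t ≥ λ`. -/
def hST (lam t : ℝ) : ℝ := if t ≤ -lam then 1 else if t < lam then 0 else -1

open Set Real

lemma measurable_hST (lam : ℝ) : Measurable (hST lam) := by
  unfold hST
  exact Measurable.ite (measurableSet_le measurable_id measurable_const) measurable_const
    (Measurable.ite (measurableSet_lt measurable_id measurable_const) measurable_const
      measurable_const)

lemma abs_hST_le (lam t : ℝ) : |hST lam t| ≤ 1 := by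
  unfold hST; split_ifs <;> norm_num

lemma hST_shift_eq {lam : ℝ} (hlam : 0 < lam) (ε t : ℝ) :
    hST lam (t + ε) = (Iic (-lam - ε)).indicator (fun _ => (1 : ℝ)) t
      - (Ici (lam - ε)).indicator (fun _ => (1 : ℝ)) t := by
  unfold hST
  simp only [Set.indicator_apply, Set.mem_Iic, Set.mem_Ici]
  split_ifs <;> norm_num <;> linarith

/-- pushforward of a product of probability measures along coordinate evaluation -/
lemma pi_map_eval {n : ℕ} (μs : Fin n → Measure ℝ) [∀ i, IsProbabilityMeasure (μs i)]
    (i : Fin n) : (Measure.pi μs).map (Function.eval i) = μs i := by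
  ext s hs
  rw [Measure.map_apply (measurable_pi_apply i) hs]
  have hpre : Function.eval i ⁻¹' s
      = Set.pi Set.univ (Function.update (fun _ : Fin n => (Set.univ : Set ℝ)) i s) := by
    ext y
    simp only [Set.mem_preimage, Set.mem_univ_pi, Function.update_apply]
    constructor
    · intro hy j
      by_cases hj : j = i
      · subst hj; simp [hy]
      · simp [hj]
    · intro hy
      have := hy i
      simpa using this
  rw [hpre, Measure.pi_pi]
  rw [Finset.prod_eq_single i (fun j _ hj => by simp [Function.update_apply, hj])
    (by simp)]
  simp

lemma continuous_gaussianPDFReal (m : ℝ) (v : NNReal) :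
    Continuous (gaussianPDFReal m v) := by
  unfold gaussianPDFReal
  fun_prop

/-- one-sided difference quotient from `HasDerivAt` -/
lemma tendsto_left_diff_quot {F : ℝ → ℝ} {a d : ℝ} (h : HasDerivAt F d a) :
    Tendsto (fun ε : ℝ => (F a - F (a - ε)) / ε) (𝓝[>] 0) (𝓝 d) := by
  have hs := hasDerivAt_iff_tendsto_slope.mp h
  have hφ : Tendsto (fun ε : ℝ => a - ε) (𝓝[>] 0) (𝓝[≠] a) := by
    apply tendsto_nhdsWithin_of_tendsto_nhds_of_eventually_within
    · have : Tendsto (fun ε : ℝ => a - ε) (𝓝 0) (𝓝 (a - 0)) :=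
        (tendsto_const_nhds.sub tendsto_id)
      simpa using this.mono_left nhdsWithin_le_nhds
    · filter_upwards [self_mem_nhdsWithin] with ε (hε : 0 < ε)
      simp only [Set.mem_compl_iff, Set.mem_singleton_iff]
      intro hc
      have : ε = 0 := by linarith [sub_eq_self.mp hc]
      linarith
  have := hs.comp hφ
  refine this.congr fun ε => ?_
  simp only [Function.comp_apply, slope_def_field]
  rw [show a - ε - a = -ε by ring, div_neg, ← neg_div, neg_sub]


section Coord

variable {lam σ : ℝ}

/-- The CDF of the Gaussian measure. -/
def gcdf (m : ℝ) (v : NNReal) (x : ℝ) : ℝ := (gaussianReal m v (Iic x)).toReal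

lemma gcdf_eq_integral (m : ℝ) {v : NNReal} (hv : v ≠ 0) (x : ℝ) :
    gcdf m v x = ∫ t in Iic x, gaussianPDFReal m v t := by
  rw [gcdf, gaussianReal_apply_eq_integral m hv, ENNReal.toReal_ofReal]
  exact setIntegral_nonneg measurableSet_Iic fun t _ => gaussianPDFReal_nonneg m v t

lemma hasDerivAt_gcdf (m : ℝ) {v : NNReal} (hv : v ≠ 0) (a : ℝ) :
    HasDerivAt (gcdf m v) (gaussianPDFReal m v a) a := by
  have hint := integrable_gaussianPDFReal m v
  have hF : gcdf m v = fun x => gcdf m v 0 + ∫ t in (0:ℝ)..x, gaussianPDFReal m v t := by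
    funext x
    rw [gcdf_eq_integral m hv, gcdf_eq_integral m hv,
      ← intervalIntegral.integral_Iic_sub_Iic hint.integrableOn hint.integrableOn]
    ring
  rw [hF]
  exact ((intervalIntegral.integral_hasDerivAt_right hint.intervalIntegrable
    ((stronglyMeasurable_gaussianPDFReal m v).stronglyMeasurableAtFilter)
    ((continuous_gaussianPDFReal m v).continuousAt)).const_add _)

lemma gauss_Ici (m : ℝ) {v : NNReal} (hv : v ≠ 0) (a : ℝ) :
    (gaussianReal m v (Ici a)).toReal = 1 - gcdf m v a := by
  have hsing : ∀ x : ℝ, gaussianReal m v {x} = 0 := fun x =>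
    gaussianReal_absolutelyContinuous m hv (measure_singleton x)
  have hIio : gaussianReal m v (Iio a) = gaussianReal m v (Iic a) :=
    measure_congr (Iio_ae_eq_Iic' (hsing a))
  have hcompl : gaussianReal m v (Ici a) = 1 - gaussianReal m v (Iio a) := by
    rw [← compl_Iio]; exact prob_compl_eq_one_sub measurableSet_Iio
  rw [hcompl, hIio, ENNReal.toReal_sub_of_le prob_le_one ENNReal.one_ne_top]
  simp [gcdf]

lemma integral_hST_shift (hlam : 0 < lam) (m : ℝ) {v : NNReal} (hv : v ≠ 0) (ε : ℝ) :
    ∫ x, hST lam (x + ε) ∂(gaussianReal m v)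
      = gcdf m v (-lam - ε) - (1 - gcdf m v (lam - ε)) := by
  have h1 : (fun x => hST lam (x + ε))
      = fun x => (Iic (-lam - ε)).indicator (fun _ => (1:ℝ)) x
        - (Ici (lam - ε)).indicator (fun _ => (1:ℝ)) x := funext (hST_shift_eq hlam ε)
  rw [h1, integral_sub ((integrable_const (1:ℝ)).indicator measurableSet_Iic)
    ((integrable_const (1:ℝ)).indicator measurableSet_Ici)]
  rw [show ((fun _ : ℝ => (1:ℝ)) : ℝ → ℝ) = (1 : ℝ → ℝ) from rfl,
    integral_indicator_one measurableSet_Iic, integral_indicator_one measurableSet_Ici,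
    measureReal_def, measureReal_def, gauss_Ici m hv]
  rfl

lemma coord_tendsto (hlam : 0 < lam) (hσ : 0 < σ) (m : ℝ) :
    Tendsto (fun ε : ℝ =>
        (1 / ε) * ∫ x, (hST lam (x + ε) - hST lam x)
          ∂(gaussianReal m ⟨σ ^ 2, sq_nonneg σ⟩))
      (𝓝[>] (0 : ℝ))
      (𝓝 (-(1 / (Real.sqrt (2 * Real.pi) * σ)) *
        (Real.exp (-(m + lam) ^ 2 / (2 * σ ^ 2))
          + Real.exp (-(m - lam) ^ 2 / (2 * σ ^ 2))))) := by
  set v : NNReal := ⟨σ ^ 2, sq_nonneg σ⟩ with hv_def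
  have hv : v ≠ 0 := by
    intro h
    have : σ ^ 2 = 0 := congrArg (fun x : NNReal => (x : ℝ)) h
    nlinarith
  have hInt : ∀ ε : ℝ, Integrable (fun x => hST lam (x + ε)) (gaussianReal m v) := by
    intro ε
    refine (integrable_const (1:ℝ)).mono'
      (((measurable_hST lam).comp (measurable_add_const ε)).aestronglyMeasurable) ?_
    exact ae_of_all _ fun x => by simpa using abs_hST_le lam (x + ε)
  have hInt0 : Integrable (hST lam) (gaussianReal m v) := by
    simpa using hInt 0
  have hval : ∀ ε : ℝ, ∫ x, (hST lam (x + ε) - hST lam x) ∂(gaussianReal m v)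
      = -((gcdf m v (-lam) - gcdf m v (-lam - ε)) + (gcdf m v lam - gcdf m v (lam - ε))) := by
    intro ε
    rw [integral_sub (hInt ε) hInt0]
    have h0 : ∫ x, hST lam x ∂(gaussianReal m v)
        = gcdf m v (-lam - 0) - (1 - gcdf m v (lam - 0)) := by
      rw [← integral_hST_shift hlam m hv 0]; simp
    rw [integral_hST_shift hlam m hv ε, h0]
    ring_nf
  have heq : (fun ε : ℝ =>
      (1 / ε) * ∫ x, (hST lam (x + ε) - hST lam x) ∂(gaussianReal m v))
      = fun ε : ℝ => -((gcdf m v (-lam) - gcdf m v (-lam - ε)) / ε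
          + (gcdf m v lam - gcdf m v (lam - ε)) / ε) := by
    funext ε
    rw [hval ε]
    ring
  rw [heq]
  have hT : Tendsto (fun ε : ℝ =>
      (gcdf m v (-lam) - gcdf m v (-lam - ε)) / ε
        + (gcdf m v lam - gcdf m v (lam - ε)) / ε) (𝓝[>] 0)
      (𝓝 (gaussianPDFReal m v (-lam) + gaussianPDFReal m v lam)) :=
    (tendsto_left_diff_quot (hasDerivAt_gcdf m hv (-lam))).add
      (tendsto_left_diff_quot (hasDerivAt_gcdf m hv lam))
  have hpdf : gaussianPDFReal m v (-lam) + gaussianPDFReal m v lam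
      = (1 / (Real.sqrt (2 * Real.pi) * σ)) *
        (Real.exp (-(m + lam) ^ 2 / (2 * σ ^ 2))
          + Real.exp (-(m - lam) ^ 2 / (2 * σ ^ 2))) := by
    have hvr : (v : ℝ) = σ ^ 2 := rfl
    have hsqrt : Real.sqrt (2 * Real.pi * σ ^ 2) = Real.sqrt (2 * Real.pi) * σ := by
      rw [Real.sqrt_mul (by positivity), Real.sqrt_sq hσ.le]
    unfold gaussianPDFReal
    rw [hvr, hsqrt, show (-lam - m) ^ 2 = (m + lam) ^ 2 by ring,
      show (lam - m) ^ 2 = (m - lam) ^ 2 by ring]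
    field_simp
  rw [show -(1 / (Real.sqrt (2 * Real.pi) * σ)) *
      (Real.exp (-(m + lam) ^ 2 / (2 * σ ^ 2)) + Real.exp (-(m - lam) ^ 2 / (2 * σ ^ 2)))
      = -(gaussianPDFReal m v (-lam) + gaussianPDFReal m v lam) by rw [hpdf]; ring]
  exact hT.neg

end Coord

/-- **Asymptotic unbiasedness of the DOF gradient estimator for soft-thresholding.**
For independent `Y_i ~ N((μ0)_i, σ²)` and `λ > 0`,
`lim_{ε→0⁺} E[(1/ε) Σ_i (h(Y_i + ε) - h(Y_i))]
  = -(1/(√(2π) σ)) Σ_i [exp(-((μ0)_i + λ)²/(2σ²)) + exp(-((μ0)_i - λ)²/(2σ²))]`. -/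
theorem fd_dof_gradient_limit
    {P : ℕ} (lam σ : ℝ) (hlam : 0 < lam) (hσ : 0 < σ) (μ0 : Fin P → ℝ) :
    Tendsto (fun ε : ℝ =>
        ∫ y : Fin P → ℝ, (1 / ε) * ∑ i : Fin P, (hST lam (y i + ε) - hST lam (y i))
          ∂(Measure.pi fun i => gaussianReal (μ0 i) ⟨σ ^ 2, sq_nonneg σ⟩))
      (𝓝[>] (0 : ℝ))
      (𝓝 (-(1 / (Real.sqrt (2 * Real.pi) * σ)) * ∑ i : Fin P,
        (Real.exp (-(μ0 i + lam) ^ 2 / (2 * σ ^ 2))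
          + Real.exp (-(μ0 i - lam) ^ 2 / (2 * σ ^ 2))))) := by
  set γ : Fin P → Measure ℝ := fun i => gaussianReal (μ0 i) ⟨σ ^ 2, sq_nonneg σ⟩ with hγ
  haveI : ∀ i, IsProbabilityMeasure (γ i) := fun i => instIsProbabilityMeasureGaussianReal _ _
  have hIntCoord : ∀ (i : Fin P) (ε : ℝ),
      Integrable (fun y : Fin P → ℝ => hST lam (y i + ε) - hST lam (y i)) (Measure.pi γ) := by
    intro i ε
    refine (integrable_const (2:ℝ)).mono'
      (((measurable_hST lam).comp ((measurable_pi_apply (X := fun _ : Fin P => ℝ) i).add_const ε)).sub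
        ((measurable_hST lam).comp (measurable_pi_apply i))).aestronglyMeasurable ?_
    refine ae_of_all _ fun y => ?_
    have h1 := abs_hST_le lam (y i + ε)
    have h2 := abs_hST_le lam (y i)
    calc ‖hST lam (y i + ε) - hST lam (y i)‖
        ≤ |hST lam (y i + ε)| + |hST lam (y i)| := abs_sub _ _
      _ ≤ 2 := by linarith
  have hswap : ∀ (i : Fin P) (ε : ℝ),
      ∫ y : Fin P → ℝ, (hST lam (y i + ε) - hST lam (y i)) ∂(Measure.pi γ)
        = ∫ x, (hST lam (x + ε) - hST lam x) ∂(γ i) := by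
    intro i ε
    rw [← pi_map_eval γ i, integral_map (measurable_pi_apply i).aemeasurable
      (((measurable_hST lam).comp (measurable_add_const ε)).sub
        (measurable_hST lam)).aestronglyMeasurable]
  have heq : (fun ε : ℝ =>
      ∫ y : Fin P → ℝ, (1 / ε) * ∑ i : Fin P, (hST lam (y i + ε) - hST lam (y i))
        ∂(Measure.pi γ))
      = fun ε : ℝ => ∑ i : Fin P,
          (1 / ε) * ∫ x, (hST lam (x + ε) - hST lam x) ∂(γ i) := by
    funext ε
    rw [integral_const_mul, integral_finset_sum _ (fun i _ => hIntCoord i ε),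
      Finset.mul_sum]
    exact Finset.sum_congr rfl fun i _ => by rw [hswap i ε]
  rw [heq, show -(1 / (Real.sqrt (2 * Real.pi) * σ)) * ∑ i : Fin P,
      (Real.exp (-(μ0 i + lam) ^ 2 / (2 * σ ^ 2))
        + Real.exp (-(μ0 i - lam) ^ 2 / (2 * σ ^ 2)))
      = ∑ i : Fin P, -(1 / (Real.sqrt (2 * Real.pi) * σ)) *
        (Real.exp (-(μ0 i + lam) ^ 2 / (2 * σ ^ 2))
          + Real.exp (-(μ0 i - lam) ^ 2 / (2 * σ ^ 2))) from Finset.mul_sum _ _ _]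
  exact tendsto_finset_sum _ fun i _ => coord_tendsto hlam hσ (μ0 i)
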